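/- Let M be a given consumer rate budget. There exist a positive integer N₀ and a constant k_infl > 0 such that if N > N₀ and M_infl > N·k_infl, then the following equivalence holds: an allocation Ω* = (μ*_infl, Λ*, X*) is a Nash equilibrium of the game with perfect information if and only if Ω* is a Nash equilibrium of the proxy game (in both games with the tie-break convention that if Σ_{y∈C} μ*(y_infl|y) = 0 then μ*_infl(z) = M_infl/N for all z). -/

import Mathlib

open scoped Classical

noncomputable section

private lemma tangent_bound {I : ℝ → ℝ} (hconc : ConcaveOn ℝ (Set.Ici 0) I)
    (hdiff : DifferentiableWithinAt ℝ I (Set.Ici 0) 0) (hI0 : I 0 = 0) :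
    ∀ t, 0 ≤ t → I t ≤ derivWithin I (Set.Ici 0) 0 * t := by
  intro t ht
  rcases eq_or_lt_of_le ht with h | h
  · simp [← h, hI0]
  · have hs := hconc.slope_le_derivWithin Set.self_mem_Ici (Set.mem_Ici.2 ht) h hdiff
    rw [slope_def_field, hI0, sub_zero, sub_zero] at hs
    calc I t = I t / t * t := by field_simp
    _ ≤ derivWithin I (Set.Ici 0) 0 * t := by
        exact mul_le_mul_of_nonneg_right hs ht

private lemma increment_bound {I : ℝ → ℝ} (hconc : ConcaveOn ℝ (Set.Ici 0) I)
    {M x S : ℝ} (hM : 0 < M) (hx : 0 ≤ x) (hS : 0 ≤ S) (hxS : x + S ≤ M) :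
    (I (2 * M) - I M) / M * S ≤ I (x + S) - I x := by
  rcases eq_or_lt_of_le hS with h | h
  · simp [← h]
  have hxM : x < M := by linarith
  have anti1 := hconc.slope_anti (Set.mem_Ici.2 hx)
  have h1 : slope I x (2 * M) ≤ slope I x (x + S) :=
    anti1 ⟨Set.mem_Ici.2 (by linarith), by simp; intro hc; linarith⟩
      ⟨Set.mem_Ici.2 (by linarith), by simp; intro hc; linarith⟩ (by linarith)
  have anti2 := hconc.slope_anti (Set.mem_Ici.2 (by linarith : (0:ℝ) ≤ 2 * M))
  have h2 : slope I (2 * M) M ≤ slope I (2 * M) x :=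
    anti2 ⟨Set.mem_Ici.2 hx, by simp; intro hc; linarith⟩
      ⟨Set.mem_Ici.2 hM.le, by simp; intro hc; linarith⟩ hxM.le
  have key : slope I M (2 * M) ≤ slope I x (x + S) := by
    calc slope I M (2 * M) = slope I (2 * M) M := slope_comm _ _ _
    _ ≤ slope I (2 * M) x := h2
    _ = slope I x (2 * M) := slope_comm _ _ _
    _ ≤ slope I x (x + S) := h1
  rw [slope_def_field, slope_def_field] at key
  have e1 : 2 * M - M = M := by ring
  have e2 : x + S - x = S := by ring
  rw [e1, e2] at key
  calc (I (2 * M) - I M) / M * S ≤ (I (x + S) - I x) / S * S :=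
        mul_le_mul_of_nonneg_right key hS
  _ = I (x + S) - I x := by field_simp


/-- Points of the `d`-dimensional Euclidean space. -/
abbrev E (d : ℕ) : Type := EuclideanSpace ℝ (Fin d)

/-- An allocation `Ω = (μ_infl, Λ, X)`: `muI z` is the rate with which the
influencer follows producer `z`; `mu z y` is the rate with which consumer `y`
follows producer `z` directly; `muY y` is the rate with which consumer `y`
follows the influencer; `lam y` is the rate with which consumer `y` follows
outside sources; `X z` is the content topic created by producer `z`. -/
structure Alloc (d : ℕ) where
  muI : E d → ℝ
  mu  : E d → E d → ℝ
  muY : E d → ℝ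
  lam : E d → ℝ
  X   : E d → E d

variable (d : ℕ)

/-- Admissibility of an allocation: nonnegative rates, the rate budget `M_infl`
of the influencer, the rate budget `M` of each consumer, and contents in `T`. -/
def Admissible (T : Set (E d)) (C : Finset (E d)) (Minfl M : ℝ) (Ω : Alloc d) : Prop :=
  (∀ z ∈ C, 0 ≤ Ω.muI z) ∧ ((∑ z ∈ C, Ω.muI z) ≤ Minfl) ∧
  (∀ y ∈ C, (∀ z ∈ C.erase y, 0 ≤ Ω.mu z y) ∧ 0 ≤ Ω.muY y ∧ 0 ≤ Ω.lam y ∧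
    ((∑ z ∈ C.erase y, Ω.mu z y) + Ω.muY y + Ω.lam y ≤ M)) ∧
  (∀ z ∈ C, Ω.X z ∈ T)

/-- `B(z|y) = q(x(z)|z) · p(x(z)|y)` where `p(x|y) = f(d(x,y))`, `q(x|y) = g(d(x,y))`. -/
def Bfun (f g : ℝ → ℝ) (Ω : Alloc d) (z y : E d) : ℝ :=
  g (dist (Ω.X z) z) * f (dist (Ω.X z) y)

/-- The consumption utility `U_c(y|Ω)` of consumer `y`. -/
def Uc (f g I : ℝ → ℝ) (C : Finset (E d)) (rp r0 B0 : ℝ) (Ω : Alloc d) (y : E d) : ℝ :=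
  rp * ∑ z ∈ C.erase y, Bfun d f g Ω z y * I (Ω.muI z) * I (Ω.muY y)
  + rp * ∑ z ∈ C.erase y, Bfun d f g Ω z y * I (Ω.mu z y)
  + r0 * B0 * I (Ω.lam y)

/-- The influencer utility `U_infl(μ_infl|Λ,X)`. -/
def Uinfl (f g I : ℝ → ℝ) (C : Finset (E d)) (rp : ℝ) (Ω : Alloc d) : ℝ :=
  rp * ∑ z ∈ C, ∑ y ∈ C.erase z, Bfun d f g Ω z y * I (Ω.muI z) * I (Ω.muY y)

/-- The producer utility (social support) `U_p(z|Ω)` of producer `z`. -/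
def Up (f g I : ℝ → ℝ) (C : Finset (E d)) (rp : ℝ) (Ω : Alloc d) (z : E d) : ℝ :=
  rp * ∑ y ∈ C.erase z, Bfun d f g Ω z y * I (Ω.muI z) * I (Ω.muY y)
  + rp * ∑ y ∈ C.erase z, Bfun d f g Ω z y * I (Ω.mu z y)

/-- The social welfare `Φ(Ω) = Σ_{y∈C} U_c(y|Ω)`. -/
def Phi (f g I : ℝ → ℝ) (C : Finset (E d)) (rp r0 B0 : ℝ) (Ω : Alloc d) : ℝ :=
  ∑ y ∈ C, Uc d f g I C rp r0 B0 Ω y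

/-- The allocation obtained from `Ω` when consumer `y` unilaterally deviates to
the rates `(mu', muY', lam')`. -/
def consDeviate (Ω : Alloc d) (y : E d) (mu' : E d → ℝ) (muY' lam' : ℝ) : Alloc d :=
  { Ω with
    mu := fun z w => if w = y then mu' z else Ω.mu z w,
    muY := Function.update Ω.muY y muY',
    lam := Function.update Ω.lam y lam' }

/-- The influencer's rates are a best response: no feasible deviation of
`μ_infl` increases the influencer utility. -/
def InflBR (f g I : ℝ → ℝ) (C : Finset (E d)) (rp Minfl : ℝ) (Ω : Alloc d) : Prop :=
  ∀ μI' : E d → ℝ, (∀ z ∈ C, 0 ≤ μI' z) → ((∑ z ∈ C, μI' z) ≤ Minfl) →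
    Uinfl d f g I C rp { Ω with muI := μI' } ≤ Uinfl d f g I C rp Ω

/-- Consumer `y`'s rates are a best response in the game with perfect
information: no feasible deviation increases the consumption utility. -/
def ConsBR (f g I : ℝ → ℝ) (C : Finset (E d)) (rp r0 B0 M : ℝ) (Ω : Alloc d) (y : E d) : Prop :=
  ∀ (mu' : E d → ℝ) (muY' lam' : ℝ),
    (∀ z ∈ C.erase y, 0 ≤ mu' z) → 0 ≤ muY' → 0 ≤ lam' →
    ((∑ z ∈ C.erase y, mu' z) + muY' + lam' ≤ M) →
    Uc d f g I C rp r0 B0 (consDeviate d Ω y mu' muY' lam') y ≤ Uc d f g I C rp r0 B0 Ω y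

/-- Producer `z`'s content is a best response: no deviation of the content
topic within `T` increases the producer's social support. -/
def ProdBR (f g I : ℝ → ℝ) (T : Set (E d)) (C : Finset (E d)) (rp : ℝ) (Ω : Alloc d) (z : E d) : Prop :=
  ∀ x ∈ T, Up d f g I C rp { Ω with X := Function.update Ω.X z x } z ≤ Up d f g I C rp Ω z

/-- Nash equilibrium of the game with perfect information. -/
def NashPerfect (f g I : ℝ → ℝ) (T : Set (E d)) (C : Finset (E d))
    (rp r0 B0 Minfl M : ℝ) (Ω : Alloc d) : Prop :=
  Admissible d T C Minfl M Ω ∧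
  InflBR d f g I C rp Minfl Ω ∧
  (∀ y ∈ C, ConsBR d f g I C rp r0 B0 M Ω y) ∧
  (∀ z ∈ C, ProdBR d f g I T C rp Ω z)

/-- Admissibility in the proxy game: in addition, consumers follow no producer
directly. -/
def ProxyAdmissible (T : Set (E d)) (C : Finset (E d)) (Minfl M : ℝ) (Ω : Alloc d) : Prop :=
  Admissible d T C Minfl M Ω ∧ ∀ y ∈ C, ∀ z ∈ C.erase y, Ω.mu z y = 0

/-- Consumer `y`'s rates are a best response in the proxy game, where the
consumer may only follow the influencer and outside sources. -/
def ProxyConsBR (f g I : ℝ → ℝ) (C : Finset (E d)) (rp r0 B0 M : ℝ) (Ω : Alloc d) (y : E d) : Prop :=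
  ∀ (muY' lam' : ℝ), 0 ≤ muY' → 0 ≤ lam' → muY' + lam' ≤ M →
    Uc d f g I C rp r0 B0 (consDeviate d Ω y (fun _ => 0) muY' lam') y ≤
      Uc d f g I C rp r0 B0 Ω y

/-- Nash equilibrium of the proxy game. -/
def NashProxy (f g I : ℝ → ℝ) (T : Set (E d)) (C : Finset (E d))
    (rp r0 B0 Minfl M : ℝ) (Ω : Alloc d) : Prop :=
  ProxyAdmissible d T C Minfl M Ω ∧
  InflBR d f g I C rp Minfl Ω ∧
  (∀ y ∈ C, ProxyConsBR d f g I C rp r0 B0 M Ω y) ∧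
  (∀ z ∈ C, ProdBR d f g I T C rp Ω z)

/-- Tie-break convention (Assumption 4): if no consumer follows the influencer,
the influencer splits its rate budget uniformly. -/
def TieBreak (C : Finset (E d)) (Minfl : ℝ) (Ω : Alloc d) : Prop :=
  (∑ y ∈ C, Ω.muY y) = 0 → ∀ z ∈ C, Ω.muI z = Minfl / (C.card : ℝ)

set_option maxHeartbeats 1000000 in
/-- **Proposition 5.** Let `M` be a given consumer rate budget.
There exist a positive integer `N₀` and a constant `k_infl > 0` such that if
`N > N₀` and `M_infl > N·k_infl`, then the following equivalence holds: an
allocation `Ω* = (μ*_infl, Λ*, X*)` is a Nash equilibrium of the game with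
perfect information if and only if `Ω*` is a Nash equilibrium of the proxy
game (in both games with the tie-break convention that if
`Σ_{y∈C} μ*(y_infl|y) = 0` then `μ*_infl(z) = M_infl/N` for all `z`). -/
theorem stmt19 (d : ℕ) (f g I : ℝ → ℝ)
    (hf_cont : ContinuousOn f (Set.Ici 0)) (hf_anti : StrictAntiOn f (Set.Ici 0))
    (hf_rng : ∀ t ∈ Set.Ici (0 : ℝ), f t ∈ Set.Ioc (0 : ℝ) 1)
    (hg_cont : ContinuousOn g (Set.Ici 0)) (hg_anti : StrictAntiOn g (Set.Ici 0))
    (hg_rng : ∀ t ∈ Set.Ici (0 : ℝ), g t ∈ Set.Ioc (0 : ℝ) 1)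
    (hI_diff : ContDiffOn ℝ 1 I (Set.Ici 0))
    (hI_mono : StrictMonoOn I (Set.Ici 0))
    (hI_conc : StrictConcaveOn ℝ (Set.Ici 0) I)
    (hI_zero : I 0 = 0)
    (hI_lim : Filter.Tendsto I Filter.atTop (nhds 1))
    (T : Set (E d)) (hT_ne : T.Nonempty) (hT_conv : Convex ℝ T) (hT_comp : IsCompact T)
    (rp r0 B0 : ℝ) (hrp : 0 < rp) (hr0 : 0 < r0) (hB0 : 0 < B0)
    (M : ℝ) (hM : 0 < M) :
    ∃ (N₀ : ℕ) (kinfl : ℝ), 0 < kinfl ∧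
      ∀ C : Finset (E d), ↑C ⊆ T → N₀ < C.card →
        ∀ Minfl : ℝ, (C.card : ℝ) * kinfl < Minfl →
          ∀ Ω : Alloc d, TieBreak d C Minfl Ω →
            (NashPerfect d f g I T C rp r0 B0 Minfl M Ω ↔
              NashProxy d f g I T C rp r0 B0 Minfl M Ω) := by
  classical
  -- a bound on distances within T
  obtain ⟨D₀, hD₀⟩ := Metric.isBounded_iff.1 hT_comp.isBounded
  set D : ℝ := max D₀ 0 with hDdef
  have hD0 : (0:ℝ) ≤ D := le_max_right _ _
  have hDist : ∀ x ∈ T, ∀ y ∈ T, dist x y ≤ D := fun x hx y hy =>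
    le_trans (hD₀ hx hy) (le_max_left _ _)
  -- basic bounds on f, g
  set Bm : ℝ := g D * f D with hBmdef
  have hgD := hg_rng D hD0
  have hfD := hf_rng D hD0
  have hBm_pos : 0 < Bm := mul_pos hgD.1 hfD.1
  have hBm_le1 : Bm ≤ 1 := by nlinarith [hgD.1, hgD.2, hfD.1, hfD.2]
  -- bounds on Bfun
  have hB_pos : ∀ (Θ : Alloc d) (z y : E d), 0 < Bfun d f g Θ z y := by
    intro Θ z y
    exact mul_pos (hg_rng _ dist_nonneg).1 (hf_rng _ dist_nonneg).1
  have hB_le1 : ∀ (Θ : Alloc d) (z y : E d), Bfun d f g Θ z y ≤ 1 := by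
    intro Θ z y
    have h1 := hg_rng (dist (Θ.X z) z) dist_nonneg
    have h2 := hf_rng (dist (Θ.X z) y) dist_nonneg
    unfold Bfun
    nlinarith [h1.1, h1.2, h2.1, h2.2]
  have hB_ge : ∀ (Θ : Alloc d) (z y : E d), z ∈ T → y ∈ T → Θ.X z ∈ T →
      Bm ≤ Bfun d f g Θ z y := by
    intro Θ z y hz hy hX
    have hd1 : dist (Θ.X z) z ≤ D := hDist _ hX _ hz
    have hd2 : dist (Θ.X z) y ≤ D := hDist _ hX _ hy
    have hg1 : g D ≤ g (dist (Θ.X z) z) :=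
      hg_anti.antitoneOn (Set.mem_Ici.2 dist_nonneg) (Set.mem_Ici.2 hD0) hd1
    have hf1 : f D ≤ f (dist (Θ.X z) y) :=
      hf_anti.antitoneOn (Set.mem_Ici.2 dist_nonneg) (Set.mem_Ici.2 hD0) hd2
    exact mul_le_mul hg1 hf1 hfD.1.le (le_of_lt (hg_rng _ dist_nonneg).1)
  -- basic facts about I
  have hI_nonneg : ∀ t, 0 ≤ t → 0 ≤ I t := by
    intro t ht
    rcases eq_or_lt_of_le ht with h | h
    · rw [← h, hI_zero]
    · have := hI_mono Set.self_mem_Ici (Set.mem_Ici.2 ht) h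
      rw [hI_zero] at this; exact this.le
  have hI_le1 : ∀ t, 0 ≤ t → I t ≤ 1 := by
    intro t ht
    have hmem : t + 1 ∈ Set.Ici (0:ℝ) := Set.mem_Ici.2 (by linarith)
    have h2 : I t < I (t + 1) := hI_mono (Set.mem_Ici.2 ht) hmem (lt_add_one t)
    have h3 : I (t + 1) ≤ 1 := by
      refine ge_of_tendsto hI_lim ?_
      refine Filter.eventually_atTop.2 ⟨t + 1, fun u hu => ?_⟩
      exact hI_mono.monotoneOn hmem (Set.mem_Ici.2 (by linarith)) hu
    linarith
  have hI1_pos : 0 < I 1 := by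
    have := hI_mono Set.self_mem_Ici (Set.mem_Ici.2 zero_le_one) one_pos
    rwa [hI_zero] at this
  have hconc : ConcaveOn ℝ (Set.Ici 0) I := hI_conc.concaveOn
  have hdiff0 : DifferentiableWithinAt ℝ I (Set.Ici 0) 0 :=
    (hI_diff.differentiableOn one_ne_zero) 0 Set.self_mem_Ici
  set c0 : ℝ := derivWithin I (Set.Ici 0) 0 with hc0def
  have hc0 : ∀ t, 0 ≤ t → I t ≤ c0 * t := tangent_bound hconc hdiff0 hI_zero
  have hc0_pos : 0 < c0 := by
    have := hc0 1 zero_le_one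
    nlinarith [hI1_pos]
  set c1 : ℝ := (I (2 * M) - I M) / M with hc1def
  have hc1_pos : 0 < c1 := by
    apply div_pos _ hM
    have := hI_mono (Set.mem_Ici.2 hM.le) (Set.mem_Ici.2 (by linarith : (0:ℝ) ≤ 2 * M))
      (by linarith)
    linarith
  have hinc : ∀ x S : ℝ, 0 ≤ x → 0 ≤ S → x + S ≤ M → c1 * S ≤ I (x + S) - I x := by
    intro x S hx hS hxS
    have := increment_bound hconc hM hx hS hxS
    rw [hc1def]; linarith [this]
  -- the constants
  set x₀ : ℝ := (c0 + Bm * c1) / (Bm ^ 2 * I 1 * c1) with hx₀def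
  refine ⟨⌈x₀⌉₊ + 1, 1, one_pos, ?_⟩
  intro C hCT hNgt Minfl hMinfl Ω hTB
  have hyC_T : ∀ y ∈ C, y ∈ T := fun y hy => hCT hy
  have hN1 : 1 ≤ C.card := by omega
  have hNR : (0:ℝ) < (C.card : ℝ) := by
    have : 0 < C.card := hN1
    exact_mod_cast this
  have hMinfl' : (C.card : ℝ) < Minfl := by
    have := hMinfl; rwa [mul_one] at this
  have hMinfl_pos : 0 < Minfl := lt_trans hNR hMinfl'
  have hdivpos : (0:ℝ) ≤ Minfl / (C.card : ℝ) := by positivity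
  have hdiv1 : (1:ℝ) < Minfl / (C.card : ℝ) := (one_lt_div hNR).2 hMinfl'
  have hIdiv : I 1 ≤ I (Minfl / (C.card : ℝ)) :=
    (hI_mono (Set.mem_Ici.2 zero_le_one) (Set.mem_Ici.2 hdivpos) hdiv1).le
  -- formula for Uc after a consumer deviation
  have hUc_dev : ∀ (mu' : E d → ℝ) (muY' lam' : ℝ) (y : E d),
      Uc d f g I C rp r0 B0 (consDeviate d Ω y mu' muY' lam') y =
        rp * ((∑ z ∈ C.erase y, Bfun d f g Ω z y * I (Ω.muI z)) * I muY')
        + rp * ∑ z ∈ C.erase y, Bfun d f g Ω z y * I (mu' z)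
        + r0 * B0 * I lam' := by
    intro mu' muY' lam' y
    simp [Uc, consDeviate, Bfun, Function.update_self, Finset.sum_mul]
  have hUcΩ : ∀ y : E d,
      Uc d f g I C rp r0 B0 Ω y =
        rp * ((∑ z ∈ C.erase y, Bfun d f g Ω z y * I (Ω.muI z)) * I (Ω.muY y))
        + rp * ∑ z ∈ C.erase y, Bfun d f g Ω z y * I (Ω.mu z y)
        + r0 * B0 * I (Ω.lam y) := by
    intro y
    simp [Uc, Finset.sum_mul]
  -- piece 1: bound on the direct-following utility of a consumer
  have hpiece1 : ∀ (y : E d) (s : E d → ℝ), (∀ z ∈ C.erase y, 0 ≤ s z) →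
      (∑ z ∈ C.erase y, Bfun d f g Ω z y * I (s z)) ≤ c0 * ∑ z ∈ C.erase y, s z := by
    intro y s hs
    rw [Finset.mul_sum]
    apply Finset.sum_le_sum
    intro z hz
    have h1 : I (s z) ≤ c0 * s z := hc0 _ (hs z hz)
    have h2 : 0 ≤ I (s z) := hI_nonneg _ (hs z hz)
    have h3 := hB_le1 Ω z y
    have h4 := hB_pos Ω z y
    nlinarith
  -- the key lower bound on A_y, valid at any admissible allocation where the
  -- influencer plays a best response
  have hA : Admissible d T C Minfl M Ω → InflBR d f g I C rp Minfl Ω →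
      ∀ y ∈ C, c0 < c1 * ∑ z ∈ C.erase y, Bfun d f g Ω z y * I (Ω.muI z) := by
    intro hAdm hBR y hy
    obtain ⟨hmuI0, hmuIbud, hcons, hX⟩ := hAdm
    -- Step 1: lower bound on the sum of I (muI z)
    have hSum : I 1 * Bm * ((C.card : ℝ) - 1) - 1 ≤ ∑ z ∈ C.erase y, I (Ω.muI z) := by
      by_cases hS0 : (∑ w ∈ C, Ω.muY w) = 0
      · -- tie-break case
        have htb := hTB hS0
        have hconst : ∑ z ∈ C.erase y, I (Ω.muI z)
            = ((C.card : ℝ) - 1) * I (Minfl / (C.card : ℝ)) := by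
          rw [Finset.sum_congr rfl (fun z hz => by
            rw [htb z (Finset.mem_of_mem_erase hz)])]
          rw [Finset.sum_const, Finset.card_erase_of_mem hy, nsmul_eq_mul]
          rw [Nat.cast_sub hN1, Nat.cast_one]
        rw [hconst]
        have hNm1 : (0:ℝ) ≤ (C.card : ℝ) - 1 := by
          have : (1:ℝ) ≤ (C.card : ℝ) := by exact_mod_cast hN1
          linarith
        have e1 : I 1 * ((C.card:ℝ) - 1) ≤ I (Minfl / (C.card:ℝ)) * ((C.card:ℝ) - 1) :=
          mul_le_mul_of_nonneg_right hIdiv hNm1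
        have e2 : 0 ≤ (1 - Bm) * (I 1 * ((C.card:ℝ) - 1)) :=
          mul_nonneg (by linarith) (mul_nonneg hI1_pos.le hNm1)
        nlinarith [e1, e2]
      · -- some consumer follows the influencer
        have hmuY0 : ∀ w ∈ C, 0 ≤ Ω.muY w := fun w hw => (hcons w hw).2.1
        have hex : ∃ w ∈ C, 0 < Ω.muY w := by
          by_contra hcon
          push_neg at hcon
          exact hS0 (Finset.sum_eq_zero fun w hw =>
            le_antisymm (hcon w hw) (hmuY0 w hw))
        obtain ⟨w₀, hw₀, hw₀pos⟩ := hex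
        set St : ℝ := ∑ w ∈ C, I (Ω.muY w) with hStdef
        have hSt_pos : 0 < St := by
          apply Finset.sum_pos' (fun w hw => hI_nonneg _ (hmuY0 w hw))
          refine ⟨w₀, hw₀, ?_⟩
          have := hI_mono Set.self_mem_Ici (Set.mem_Ici.2 (hmuY0 w₀ hw₀)) hw₀pos
          · rw [hI_zero] at this; exact this
        -- influencer best response against the uniform allocation
        have hBRu := hBR (fun _ => Minfl / (C.card : ℝ))
          (fun z _ => hdivpos)
          (by
            rw [Finset.sum_const, nsmul_eq_mul]
            rw [mul_div_cancel₀ _ (ne_of_gt hNR)])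
        have hUinfl_eq : Uinfl d f g I C rp { Ω with muI := fun _ => Minfl / (C.card : ℝ) } =
            rp * ∑ z ∈ C, ∑ v ∈ C.erase z,
              Bfun d f g Ω z v * I (Minfl / (C.card : ℝ)) * I (Ω.muY v) := rfl
        have hUinflΩ : Uinfl d f g I C rp Ω =
            rp * ∑ z ∈ C, ∑ v ∈ C.erase z,
              Bfun d f g Ω z v * I (Ω.muI z) * I (Ω.muY v) := rfl
        have hBRu' : (∑ z ∈ C, ∑ v ∈ C.erase z,
              Bfun d f g Ω z v * I (Minfl / (C.card : ℝ)) * I (Ω.muY v))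
            ≤ ∑ z ∈ C, ∑ v ∈ C.erase z,
              Bfun d f g Ω z v * I (Ω.muI z) * I (Ω.muY v) := by
          have h := hBRu
          rw [hUinfl_eq, hUinflΩ] at h
          exact le_of_mul_le_mul_left h hrp
        -- rewrite both sides
        have hLHS : (∑ z ∈ C, ∑ v ∈ C.erase z,
              Bfun d f g Ω z v * I (Minfl / (C.card : ℝ)) * I (Ω.muY v))
            = I (Minfl / (C.card : ℝ)) * ∑ z ∈ C, ∑ v ∈ C.erase z,
              Bfun d f g Ω z v * I (Ω.muY v) := by
          rw [Finset.mul_sum]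
          refine Finset.sum_congr rfl fun z _ => ?_
          rw [Finset.mul_sum]
          exact Finset.sum_congr rfl fun v _ => by ring
        have hRHS : (∑ z ∈ C, ∑ v ∈ C.erase z,
              Bfun d f g Ω z v * I (Ω.muI z) * I (Ω.muY v))
            = ∑ z ∈ C, (∑ v ∈ C.erase z, Bfun d f g Ω z v * I (Ω.muY v)) * I (Ω.muI z) := by
          refine Finset.sum_congr rfl fun z _ => ?_
          rw [Finset.sum_mul]
          exact Finset.sum_congr rfl fun v _ => by ring
        rw [hLHS, hRHS] at hBRu'
        -- bounds on a z
        have ha_lb : ∀ z ∈ C, Bm * (St - I (Ω.muY z)) ≤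
            ∑ v ∈ C.erase z, Bfun d f g Ω z v * I (Ω.muY v) := by
          intro z hz
          have : ∑ v ∈ C.erase z, Bm * I (Ω.muY v) ≤
              ∑ v ∈ C.erase z, Bfun d f g Ω z v * I (Ω.muY v) := by
            apply Finset.sum_le_sum
            intro v hv
            exact mul_le_mul_of_nonneg_right
              (hB_ge Ω z v (hyC_T z hz) (hyC_T v (Finset.mem_of_mem_erase hv)) (hX z hz))
              (hI_nonneg _ (hmuY0 v (Finset.mem_of_mem_erase hv)))
          calc Bm * (St - I (Ω.muY z))
              = ∑ v ∈ C.erase z, Bm * I (Ω.muY v) := by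
                rw [← Finset.mul_sum, Finset.sum_erase_eq_sub hz, ← hStdef]
          _ ≤ _ := this
        have ha_ub : ∀ z ∈ C, (∑ v ∈ C.erase z, Bfun d f g Ω z v * I (Ω.muY v)) ≤ St := by
          intro z hz
          calc (∑ v ∈ C.erase z, Bfun d f g Ω z v * I (Ω.muY v))
              ≤ ∑ v ∈ C.erase z, I (Ω.muY v) := by
                apply Finset.sum_le_sum
                intro v hv
                have h2 := hI_nonneg _ (hmuY0 v (Finset.mem_of_mem_erase hv))
                nlinarith [hB_le1 Ω z v, hB_pos Ω z v]
          _ ≤ St := by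
                apply Finset.sum_le_sum_of_subset_of_nonneg (Finset.erase_subset _ _)
                intro v hv _
                exact hI_nonneg _ (hmuY0 v hv)
        -- combine
        have hlow : I (Minfl / (C.card : ℝ)) * (Bm * (((C.card : ℝ) - 1) * St))
            ≤ I (Minfl / (C.card : ℝ)) * ∑ z ∈ C, ∑ v ∈ C.erase z,
              Bfun d f g Ω z v * I (Ω.muY v) := by
          apply mul_le_mul_of_nonneg_left _ (hI_nonneg _ hdivpos)
          calc Bm * (((C.card : ℝ) - 1) * St)
              = ∑ z ∈ C, Bm * (St - I (Ω.muY z)) := by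
                rw [← Finset.mul_sum]
                congr 1
                rw [Finset.sum_sub_distrib, Finset.sum_const, nsmul_eq_mul, ← hStdef]
                ring
          _ ≤ _ := Finset.sum_le_sum ha_lb
        have hhigh : (∑ z ∈ C, (∑ v ∈ C.erase z, Bfun d f g Ω z v * I (Ω.muY v)) * I (Ω.muI z))
            ≤ (∑ z ∈ C, I (Ω.muI z)) * St := by
          rw [Finset.sum_mul]
          apply Finset.sum_le_sum
          intro z hz
          have h1 := hI_nonneg _ (hmuI0 z hz)
          have h2 := ha_ub z hz
          nlinarith [ha_lb z hz]
        have hmain : I (Minfl / (C.card : ℝ)) * Bm * ((C.card : ℝ) - 1) * St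
            ≤ (∑ z ∈ C, I (Ω.muI z)) * St := by
          calc I (Minfl / (C.card : ℝ)) * Bm * ((C.card : ℝ) - 1) * St
              = I (Minfl / (C.card : ℝ)) * (Bm * (((C.card : ℝ) - 1) * St)) := by ring
          _ ≤ _ := le_trans hlow (le_trans hBRu' hhigh)
        have hmain2 : I (Minfl / (C.card : ℝ)) * Bm * ((C.card : ℝ) - 1)
            ≤ ∑ z ∈ C, I (Ω.muI z) :=
          le_of_mul_le_mul_right hmain hSt_pos
        -- pass to the sum over C.erase y
        have herase : ∑ z ∈ C.erase y, I (Ω.muI z)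
            = (∑ z ∈ C, I (Ω.muI z)) - I (Ω.muI y) :=
          Finset.sum_erase_eq_sub hy
        have hIy : I (Ω.muI y) ≤ 1 := hI_le1 _ (hmuI0 y hy)
        have hNm1 : (0:ℝ) ≤ (C.card : ℝ) - 1 := by
          have : (1:ℝ) ≤ (C.card : ℝ) := by exact_mod_cast hN1
          linarith
        rw [herase]
        have : I 1 * Bm * ((C.card : ℝ) - 1) ≤
            I (Minfl / (C.card : ℝ)) * Bm * ((C.card : ℝ) - 1) := by
          apply mul_le_mul_of_nonneg_right _ hNm1
          exact mul_le_mul_of_nonneg_right hIdiv hBm_pos.le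
        linarith
    -- Step 2: from I (muI z) to A_y
    have hStep2 : Bm * ∑ z ∈ C.erase y, I (Ω.muI z)
        ≤ ∑ z ∈ C.erase y, Bfun d f g Ω z y * I (Ω.muI z) := by
      rw [Finset.mul_sum]
      apply Finset.sum_le_sum
      intro z hz
      exact mul_le_mul_of_nonneg_right
        (hB_ge Ω z y (hyC_T z (Finset.mem_of_mem_erase hz)) (hyC_T y hy) (hX z (Finset.mem_of_mem_erase hz)))
        (hI_nonneg _ (hmuI0 z (Finset.mem_of_mem_erase hz)))
    -- Step 3: arithmetic
    have hcard : x₀ + 1 ≤ (C.card : ℝ) - 1 := by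
      have h1 : (⌈x₀⌉₊ : ℝ) + 2 ≤ (C.card : ℝ) := by
        have : (⌈x₀⌉₊ + 2 : ℕ) ≤ C.card := by omega
        exact_mod_cast this
      have h2 : x₀ ≤ (⌈x₀⌉₊ : ℝ) := Nat.le_ceil x₀
      linarith
    have hα : (0:ℝ) < Bm ^ 2 * I 1 * c1 := by positivity
    have hx₀α : x₀ * (Bm ^ 2 * I 1 * c1) = c0 + Bm * c1 := by
      rw [hx₀def]
      field_simp
    have hchain : c0 < c1 * (Bm * (I 1 * Bm * ((C.card : ℝ) - 1) - 1)) := by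
      nlinarith [hcard, hα, hx₀α]
    have hfinal : c1 * (Bm * (I 1 * Bm * ((C.card : ℝ) - 1) - 1))
        ≤ c1 * ∑ z ∈ C.erase y, Bfun d f g Ω z y * I (Ω.muI z) := by
      apply mul_le_mul_of_nonneg_left _ hc1_pos.le
      calc Bm * (I 1 * Bm * ((C.card : ℝ) - 1) - 1)
          ≤ Bm * ∑ z ∈ C.erase y, I (Ω.muI z) :=
            mul_le_mul_of_nonneg_left hSum hBm_pos.le
      _ ≤ _ := hStep2
    linarith
  -- nonnegativity of A_y
  have hApos : Admissible d T C Minfl M Ω → ∀ y : E d,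
      0 ≤ ∑ z ∈ C.erase y, Bfun d f g Ω z y * I (Ω.muI z) := by
    intro hAdm y
    apply Finset.sum_nonneg
    intro z hz
    exact mul_nonneg (hB_pos Ω z y).le
      (hI_nonneg _ (hAdm.1 z (Finset.mem_of_mem_erase hz)))
  -- the equivalence
  constructor
  · -- Perfect → Proxy
    rintro ⟨hAdm, hIBR, hCBR, hPBR⟩
    have hAy := hA hAdm hIBR
    have hmu0 : ∀ y ∈ C, ∀ z ∈ C.erase y, Ω.mu z y = 0 := by
      intro y hy z hz
      by_contra hne
      have hmu_nn := (hAdm.2.2.1 y hy).1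
      have hzpos : 0 < Ω.mu z y := lt_of_le_of_ne (hmu_nn z hz) (Ne.symm hne)
      set S : ℝ := ∑ z ∈ C.erase y, Ω.mu z y with hSdef
      have hSpos : 0 < S :=
        lt_of_lt_of_le hzpos (Finset.single_le_sum (fun i hi => hmu_nn i hi) hz)
      have hbud := (hAdm.2.2.1 y hy).2.2.2
      have hmuYnn := (hAdm.2.2.1 y hy).2.1
      have hlamnn := (hAdm.2.2.1 y hy).2.2.1
      have hdev := hCBR y hy (fun _ => 0) (Ω.muY y + S) (Ω.lam y)
        (fun _ _ => le_rfl) (by linarith) hlamnn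
        (by
          rw [Finset.sum_const_zero]
          linarith)
      rw [hUc_dev, hUcΩ] at hdev
      simp only [hI_zero, mul_zero, Finset.sum_const_zero] at hdev
      -- derive the contradiction
      set A : ℝ := ∑ z ∈ C.erase y, Bfun d f g Ω z y * I (Ω.muI z) with hAdef
      have hA0 : 0 ≤ A := hApos hAdm y
      have hAc : c0 < c1 * A := hAy y hy
      have e1 : (∑ z ∈ C.erase y, Bfun d f g Ω z y * I (Ω.mu z y)) ≤ c0 * S :=
        hpiece1 y _ (fun z hz => hmu_nn z hz)
      have e2 : c0 * S < (c1 * A) * S := mul_lt_mul_of_pos_right hAc hSpos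
      have e4 : A * (c1 * S) ≤ A * (I (Ω.muY y + S) - I (Ω.muY y)) :=
        mul_le_mul_of_nonneg_left (hinc (Ω.muY y) S hmuYnn hSpos.le (by linarith)) hA0
      have hstrict : (∑ z ∈ C.erase y, Bfun d f g Ω z y * I (Ω.mu z y))
          < A * I (Ω.muY y + S) - A * I (Ω.muY y) := by nlinarith
      have := mul_lt_mul_of_pos_left hstrict hrp
      nlinarith [hdev, this]
    refine ⟨⟨hAdm, hmu0⟩, hIBR, ?_, hPBR⟩
    intro y hy muY' lam' h1 h2 h3
    exact hCBR y hy (fun _ => 0) muY' lam' (fun _ _ => le_rfl) h1 h2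
      (by rw [Finset.sum_const_zero]; linarith)
  · -- Proxy → Perfect
    rintro ⟨⟨hAdm, hmu0⟩, hIBR, hCBR, hPBR⟩
    have hAy := hA hAdm hIBR
    refine ⟨hAdm, hIBR, ?_, hPBR⟩
    intro y hy mu' muY' lam' hmu'nn hY0 hl0 hbud
    set S' : ℝ := ∑ z ∈ C.erase y, mu' z with hS'def
    have hS'0 : 0 ≤ S' := Finset.sum_nonneg (fun z hz => hmu'nn z hz)
    set A : ℝ := ∑ z ∈ C.erase y, Bfun d f g Ω z y * I (Ω.muI z) with hAdef
    have hA0 : 0 ≤ A := hApos hAdm y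
    have hAc : c0 < c1 * A := hAy y hy
    have hstep1 : Uc d f g I C rp r0 B0 (consDeviate d Ω y mu' muY' lam') y
        ≤ Uc d f g I C rp r0 B0 (consDeviate d Ω y (fun _ => 0) (muY' + S') lam') y := by
      rw [hUc_dev, hUc_dev]
      simp only [hI_zero, mul_zero, Finset.sum_const_zero]
      have e1 : (∑ z ∈ C.erase y, Bfun d f g Ω z y * I (mu' z)) ≤ c0 * S' :=
        hpiece1 y _ hmu'nn
      have e2 : c0 * S' ≤ (c1 * A) * S' := mul_le_mul_of_nonneg_right hAc.le hS'0
      have e4 : A * (c1 * S') ≤ A * (I (muY' + S') - I muY') :=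
        mul_le_mul_of_nonneg_left (hinc muY' S' hY0 hS'0 (by linarith)) hA0
      nlinarith [hrp]
    have hstep2 := hCBR y hy (muY' + S') lam' (by linarith) hl0 (by linarith)
    exact le_trans hstep1 hstep2
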